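/- For every basis Δ of Φ and admissible Y ⊆ Δ, the closure of F_Y^Δ in A equals {x ∈ A : a(x) = 0 for all a ∈ Y and (λ₀(Δ) − λ)(x) ≥ 0 for all λ ∈ Λ}. -/

import Mathlib

/-!
Common setup for Werner, "Compactifications of Bruhat-Tits buildings associated to
linear representations":  a finite-dimensional real vector space `A` (the apartment),
a root system `Φ` in the dual space together with a Weyl-group invariant inner
product, a finite Weyl-invariant set `Λ` of (K-)weights, and for every basis `Δ`
of `Φ` a highest weight `lam0 Δ ∈ Λ`.
-/

open Pointwise Filter Topology Bornology
open scoped Classical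

noncomputable section

/-- A set `M` of linear forms is *connected* if the graph with vertex set `M` and an
edge between `m` and `n` iff `inn m n ≠ 0` is connected. -/
def GraphConnected {D : Type*} (inn : D → D → ℝ) (M : Set D) : Prop :=
  ∀ m ∈ M, ∀ n ∈ M,
    Relation.ReflTransGen (fun x y => x ∈ M ∧ y ∈ M ∧ inn x y ≠ 0) m n

/-- The coefficients of `μ` as a linear combination of the elements of `Δ` (chosen
arbitrarily if one exists; it is unique when `Δ` is linearly independent). -/
noncomputable def coeffs {A : Type*} [AddCommGroup A] [Module ℝ A]
    (Δ : Finset (Module.Dual ℝ A)) (μ : Module.Dual ℝ A) : Module.Dual ℝ A → ℝ :=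
  if h : ∃ n : Module.Dual ℝ A → ℝ, μ = ∑ b ∈ Δ, n b • b then h.choose else fun _ => 0

/-- The support `[μ]` of `μ` with respect to the basis `Δ`: the set of elements of `Δ`
whose coefficient in `μ` is nonzero. -/
noncomputable def supp {A : Type*} [AddCommGroup A] [Module ℝ A]
    (Δ : Finset (Module.Dual ℝ A)) (μ : Module.Dual ℝ A) : Finset (Module.Dual ℝ A) :=
  Δ.filter fun a => coeffs Δ μ a ≠ 0

/-- Raw data: a finite set `Φ` of roots in the dual of `A`, a product `inn` on the dual,
a finite set `Λ` of weights, and a highest weight `lam0 Δ` for every basis `Δ`. -/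
structure RootWeightData (A : Type*) [NormedAddCommGroup A] [NormedSpace ℝ A]
    [FiniteDimensional ℝ A] where
  Φ : Finset (Module.Dual ℝ A)
  inn : Module.Dual ℝ A → Module.Dual ℝ A → ℝ
  Λ : Finset (Module.Dual ℝ A)
  lam0 : Finset (Module.Dual ℝ A) → Module.Dual ℝ A

namespace RootWeightData

variable {A : Type*} [NormedAddCommGroup A] [NormedSpace ℝ A] [FiniteDimensional ℝ A]
variable (S : RootWeightData A)

/-- The reflection associated to the root `a`. -/
def refl (a : Module.Dual ℝ A) : Function.End (Module.Dual ℝ A) :=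
  fun x => x - (2 * S.inn x a / S.inn a a) • a

/-- The Weyl group `W`, generated by the reflections in the roots. -/
def weyl : Submonoid (Function.End (Module.Dual ℝ A)) :=
  Submonoid.closure {f | ∃ a ∈ S.Φ, f = S.refl a}

/-- `Δ` is a basis of the root system `Φ`: a linearly independent subset of `Φ` such
that every root is a nonnegative or nonpositive linear combination of `Δ`. -/
def IsBase (Δ : Finset (Module.Dual ℝ A)) : Prop :=
  (↑Δ : Set (Module.Dual ℝ A)) ⊆ (S.Φ : Set (Module.Dual ℝ A)) ∧
  LinearIndependent ℝ (fun a : (Δ : Set (Module.Dual ℝ A)) => (a : Module.Dual ℝ A)) ∧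
  ∀ a ∈ S.Φ,
    (∃ n : Module.Dual ℝ A → ℝ, (∀ b ∈ Δ, 0 ≤ n b) ∧ a = ∑ b ∈ Δ, n b • b) ∨
    (∃ n : Module.Dual ℝ A → ℝ, (∀ b ∈ Δ, 0 ≤ n b) ∧ a = -∑ b ∈ Δ, n b • b)

/-- `Y` is an admissible subset of the basis `Δ`: `Y ⊆ Δ` and `Y ∪ {λ₀(Δ)}` is
connected. -/
def Admissible (Δ Y : Finset (Module.Dual ℝ A)) : Prop :=
  Y ⊆ Δ ∧ GraphConnected S.inn ((↑Y : Set (Module.Dual ℝ A)) ∪ {S.lam0 Δ})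

end RootWeightData

/-- The whole setting of Werner's paper: the data of `RootWeightData`, where `Φ` is a
(crystallographic, possibly non-reduced) root system spanning the dual of `A`, `inn` is
a Weyl-invariant inner product, `Λ` is a finite Weyl-invariant set of weights, and
`lam0` picks, Weyl-equivariantly, a highest weight for each basis, dominating all of
`Λ`; moreover a subset of a basis is admissible iff it is the support of
`λ₀(Δ) - λ` for some weight `λ`. -/
structure RootWeightSystem (A : Type*) [NormedAddCommGroup A] [NormedSpace ℝ A]
    [FiniteDimensional ℝ A] extends RootWeightData A where
  inn_symm : ∀ x y, inn x y = inn y x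
  inn_add_left : ∀ x y z, inn (x + y) z = inn x z + inn y z
  inn_smul_left : ∀ (c : ℝ) (x y), inn (c • x) y = c * inn x y
  inn_pos : ∀ x, x ≠ 0 → 0 < inn x x
  root_ne_zero : ∀ a ∈ Φ, a ≠ (0 : Module.Dual ℝ A)
  neg_mem : ∀ a ∈ Φ, -a ∈ Φ
  refl_mem : ∀ a ∈ Φ, ∀ b ∈ Φ, toRootWeightData.refl a b ∈ Φ
  inn_weyl_invariant :
    ∀ w ∈ toRootWeightData.weyl, ∀ x y, inn (w x) (w y) = inn x y
  phi_spans : Submodule.span ℝ (Φ : Set (Module.Dual ℝ A)) = ⊤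
  exists_base : ∃ Δ, toRootWeightData.IsBase Δ
  base_cover : ∀ x : A, ∃ Δ, toRootWeightData.IsBase Δ ∧ ∀ a ∈ Δ, 0 ≤ a x
  base_weyl : ∀ w ∈ toRootWeightData.weyl, ∀ Δ, toRootWeightData.IsBase Δ →
    toRootWeightData.IsBase (Δ.image (w : Module.Dual ℝ A → Module.Dual ℝ A))
  lam0_mem : ∀ Δ, toRootWeightData.IsBase Δ → lam0 Δ ∈ Λ
  lam0_dominates : ∀ Δ, toRootWeightData.IsBase Δ → ∀ l ∈ Λ,
    ∃ n : Module.Dual ℝ A → ℝ, (∀ a ∈ Δ, 0 ≤ n a) ∧ lam0 Δ - l = ∑ a ∈ Δ, n a • a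
  weight_weyl_invariant : ∀ w ∈ toRootWeightData.weyl, ∀ l ∈ Λ, w l ∈ Λ
  lam0_equivariant : ∀ w ∈ toRootWeightData.weyl, ∀ Δ, toRootWeightData.IsBase Δ →
    lam0 (Δ.image (w : Module.Dual ℝ A → Module.Dual ℝ A)) = w (lam0 Δ)
  integrality : ∀ l ∈ Λ, ∀ a ∈ Φ, ∃ k : ℤ, 2 * inn l a / inn a a = (k : ℝ)
  admissible_iff_support : ∀ Δ, toRootWeightData.IsBase Δ → ∀ Y ⊆ Δ,
    (toRootWeightData.Admissible Δ Y ↔ ∃ l ∈ Λ, supp Δ (lam0 Δ - l) = Y)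

namespace RootWeightSystem

variable {A : Type*} [NormedAddCommGroup A] [NormedSpace ℝ A] [FiniteDimensional ℝ A]
variable (S : RootWeightSystem A)

/-- The face `F_Y^Δ` of the apartment `A` associated to a basis `Δ` and an admissible
subset `Y ⊆ Δ`. -/
def Face (Δ Y : Finset (Module.Dual ℝ A)) : Set A :=
  {x | (∀ a ∈ Y, a x = 0) ∧
    ∀ l ∈ S.Λ, ¬ supp Δ (S.lam0 Δ - l) ⊆ Y → 0 < (S.lam0 Δ - l) x}

/-- `F` belongs to the collection `Σ` of faces. -/
def IsFace (F : Set A) : Prop :=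
  ∃ Δ Y, S.toRootWeightData.IsBase Δ ∧ S.toRootWeightData.Admissible Δ Y ∧
    F = S.Face Δ Y

/-- The collection `Σ` of all faces. -/
def Faces : Type _ := {F : Set A // S.IsFace F}

/-- The relation identifying `(F, u)` and `(F, v)` when `u - v ∈ ⟨F⟩`; the quotient is
the disjoint union `Ā = ⊔_{F ∈ Σ} A/⟨F⟩`. -/
def AbarRel (p q : S.Faces × A) : Prop :=
  p.1 = q.1 ∧ p.2 - q.2 ∈ Submodule.span ℝ p.1.val

/-- The compactified apartment `Ā = ⊔_{F ∈ Σ} A_F`, `A_F = A/⟨F⟩`. -/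
def Abar : Type _ := Quot S.AbarRel

/-- `r_F(u)`, the image of `u ∈ A` in the stratum `A_F` of `Ā`. -/
def mkAbar (F : S.Faces) (u : A) : S.Abar := Quot.mk _ (F, u)

/-- The basic set `Γ_F(U) = ⋃_{F' ⊆ cl F} r_{F'}(U + F)` of `Ā`. -/
def Gamma (F : S.Faces) (U : Set A) : Set S.Abar :=
  {p | ∃ F' : S.Faces, F'.val ⊆ closure F.val ∧ ∃ u ∈ U + F.val, p = S.mkAbar F' u}

/-- The topology of `Ā`, generated by the sets `Γ_F(U)` for `F ∈ Σ` and `U ⊆ A`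
bounded and open. -/
instance : TopologicalSpace S.Abar :=
  TopologicalSpace.generateFrom
    {V : Set S.Abar | ∃ (F : S.Faces) (U : Set A),
      IsOpen U ∧ IsBounded U ∧ V = S.Gamma F U}

/-- `f_Ω(a) = inf {t : Ω ⊆ cl_Ā {z ∈ A : a(z) ≥ -t}} ∈ ℝ ∪ {±∞}`, where `A` is embedded
in `Ā` as the stratum of the face `F₀ = {0}`. -/
def fOmega (F₀ : S.Faces) (Ω : Set S.Abar) (a : Module.Dual ℝ A) : EReal :=
  sInf ((fun t : ℝ => (t : EReal)) ''
    {t : ℝ | Ω ⊆ closure (S.mkAbar F₀ '' {z : A | -t ≤ a z})})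

end RootWeightSystem


variable {A : Type*} [NormedAddCommGroup A] [NormedSpace ℝ A] [FiniteDimensional ℝ A]


section Aux

lemma exists_eval_eq (Δ : Finset (Module.Dual ℝ A))
    (hli : LinearIndependent ℝ
      (fun a : (Δ : Set (Module.Dual ℝ A)) => (a : Module.Dual ℝ A)))
    (c : Module.Dual ℝ A → ℝ) : ∃ x : A, ∀ a ∈ Δ, a x = c a := by
  classical
  have hli' : LinearIndepOn ℝ id (Δ : Set (Module.Dual ℝ A)) := hli
  let B := Module.Basis.extend hli'
  let ψ : Module.Dual ℝ (Module.Dual ℝ A) :=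
    B.constr ℝ (fun i => c (i : Module.Dual ℝ A))
  refine ⟨(Module.evalEquiv ℝ A).symm ψ, ?_⟩
  intro a ha
  have hmem : a ∈ hli'.extend (Set.subset_univ _) :=
    hli'.subset_extend _ (by simpa using ha)
  have hB : B ⟨a, hmem⟩ = a := Module.Basis.extend_apply_self hli' ⟨a, hmem⟩
  have hψ : ψ a = c a := by
    have h1 := B.constr_basis ℝ (fun i => c (i : Module.Dual ℝ A)) ⟨a, hmem⟩
    rw [hB] at h1
    exact h1
  rw [Module.apply_evalEquiv_symm_apply, hψ]

lemma coeffs_eq_of_repr (Δ : Finset (Module.Dual ℝ A))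
    (hli : LinearIndependent ℝ
      (fun a : (Δ : Set (Module.Dual ℝ A)) => (a : Module.Dual ℝ A)))
    (μ : Module.Dual ℝ A) (n : Module.Dual ℝ A → ℝ)
    (hn : μ = ∑ b ∈ Δ, n b • b) :
    ∀ a ∈ Δ, coeffs Δ μ a = n a := by
  classical
  intro a ha
  have hex : ∃ m : Module.Dual ℝ A → ℝ, μ = ∑ b ∈ Δ, m b • b := ⟨n, hn⟩
  have hc : coeffs Δ μ = hex.choose := by rw [coeffs, dif_pos hex]
  have hμ : μ = ∑ b ∈ Δ, hex.choose b • b := hex.choose_spec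
  have hz : ∑ b ∈ Δ, (hex.choose b - n b) • b = 0 := by
    have hcong : ∀ b ∈ Δ, (hex.choose b - n b) • b = hex.choose b • b - n b • b :=
      fun b _ => sub_smul (hex.choose b) (n b) b
    rw [Finset.sum_congr rfl hcong, Finset.sum_sub_distrib, ← hμ, ← hn, sub_self]
  have hz' : ∑ i : (Δ : Set (Module.Dual ℝ A)),
      (hex.choose (i : Module.Dual ℝ A) - n (i : Module.Dual ℝ A)) •
        (i : Module.Dual ℝ A) = 0 := by
    rw [Finset.sum_finset_coe (fun b => (hex.choose b - n b) • b) Δ]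
    exact hz
  have hall := Fintype.linearIndependent_iff.mp hli
    (fun i => hex.choose (i : Module.Dual ℝ A) - n (i : Module.Dual ℝ A)) hz'
  have h2 : hex.choose a - n a = 0 := by simpa using hall ⟨a, by simpa using ha⟩
  rw [hc]
  linarith

end Aux

/-- The closure of `F_Y^Δ` in `A` is
`{x ∈ A : a(x) = 0 ∀ a ∈ Y, (λ₀(Δ) - λ)(x) ≥ 0 ∀ λ ∈ Λ}`. -/
theorem closure_face_eq (S : RootWeightSystem A)
    (Δ Y : Finset (Module.Dual ℝ A))
    (hΔ : S.toRootWeightData.IsBase Δ) (hY : S.toRootWeightData.Admissible Δ Y) :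
    closure (S.Face Δ Y) =
      {x : A | (∀ a ∈ Y, a x = 0) ∧ ∀ l ∈ S.Λ, 0 ≤ (S.lam0 Δ - l) x} := by
  classical
  have hli := hΔ.2.1
  set T : Set A :=
    {x : A | (∀ a ∈ Y, a x = 0) ∧ ∀ l ∈ S.Λ, 0 ≤ (S.lam0 Δ - l) x} with hT
  -- coefficients are nonnegative and give a representation
  have hcoef : ∀ l ∈ S.Λ, (∀ a ∈ Δ, 0 ≤ coeffs Δ (S.lam0 Δ - l) a) ∧
      S.lam0 Δ - l = ∑ a ∈ Δ, coeffs Δ (S.lam0 Δ - l) a • a := by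
    intro l hl
    obtain ⟨n, hn0, hn⟩ := S.lam0_dominates Δ hΔ l hl
    have hco := coeffs_eq_of_repr Δ hli _ n hn
    constructor
    · intro a ha; rw [hco a ha]; exact hn0 a ha
    · calc S.lam0 Δ - l = ∑ a ∈ Δ, n a • a := hn
        _ = ∑ a ∈ Δ, coeffs Δ (S.lam0 Δ - l) a • a :=
          (Finset.sum_congr rfl fun a ha => by rw [hco a ha]).symm
  -- evaluation formula
  have heval : ∀ l ∈ S.Λ, ∀ x : A,
      (S.lam0 Δ - l) x = ∑ a ∈ Δ, coeffs Δ (S.lam0 Δ - l) a * a x := by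
    intro l hl x
    conv_lhs => rw [(hcoef l hl).2]
    rw [LinearMap.coe_sum, Finset.sum_apply]
    exact Finset.sum_congr rfl fun a _ => rfl
  -- the face is contained in T
  have hsub : S.Face Δ Y ⊆ T := by
    rintro x ⟨hx1, hx2⟩
    refine ⟨hx1, fun l hl => ?_⟩
    by_cases hs : supp Δ (S.lam0 Δ - l) ⊆ Y
    · rw [heval l hl x]
      refine le_of_eq (Finset.sum_eq_zero fun a ha => ?_).symm
      by_cases hz : coeffs Δ (S.lam0 Δ - l) a = 0
      · rw [hz, zero_mul]
      · have : a ∈ supp Δ (S.lam0 Δ - l) := Finset.mem_filter.mpr ⟨ha, hz⟩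
        rw [hx1 a (hs this), mul_zero]
    · exact (hx2 l hl hs).le
  -- T is closed
  have hTclosed : IsClosed T := by
    have h1 : IsClosed {x : A | ∀ a ∈ Y, a x = 0} := by
      have : {x : A | ∀ a ∈ Y, a x = 0} = ⋂ a ∈ Y, {x : A | a x = 0} := by
        ext x; simp
      rw [this]
      exact isClosed_biInter fun a _ =>
        isClosed_eq a.continuous_of_finiteDimensional continuous_const
    have h2 : IsClosed {x : A | ∀ l ∈ S.Λ, 0 ≤ (S.lam0 Δ - l) x} := by
      have : {x : A | ∀ l ∈ S.Λ, 0 ≤ (S.lam0 Δ - l) x}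
          = ⋂ l ∈ S.Λ, {x : A | 0 ≤ (S.lam0 Δ - l) x} := by
        ext x; simp
      rw [this]
      exact isClosed_biInter fun l _ =>
        isClosed_le continuous_const (S.lam0 Δ - l).continuous_of_finiteDimensional
    exact h1.inter h2
  -- a point in the face
  obtain ⟨x₀, hx₀⟩ := exists_eval_eq Δ hli (fun a => if a ∈ Y then 0 else 1)
  have hx₀Y : ∀ a ∈ Y, a x₀ = 0 := fun a ha => by
    rw [hx₀ a (hY.1 ha), if_pos ha]
  have hx₀nn : ∀ a ∈ Δ, 0 ≤ a x₀ := fun a ha => by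
    rw [hx₀ a ha]; split <;> norm_num
  have hx₀F : x₀ ∈ S.Face Δ Y := by
    refine ⟨hx₀Y, fun l hl hns => ?_⟩
    obtain ⟨a₀, ha₀s, ha₀Y⟩ := Finset.not_subset.mp hns
    have ha₀Δ : a₀ ∈ Δ := (Finset.mem_filter.mp ha₀s).1
    have ha₀c : coeffs Δ (S.lam0 Δ - l) a₀ ≠ 0 := (Finset.mem_filter.mp ha₀s).2
    rw [heval l hl x₀]
    refine Finset.sum_pos' (fun a ha => mul_nonneg ((hcoef l hl).1 a ha) (hx₀nn a ha))
      ⟨a₀, ha₀Δ, ?_⟩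
    have : a₀ x₀ = 1 := by rw [hx₀ a₀ ha₀Δ, if_neg ha₀Y]
    rw [this, mul_one]
    exact lt_of_le_of_ne ((hcoef l hl).1 a₀ ha₀Δ) (Ne.symm ha₀c)
  -- conclusion
  apply Set.Subset.antisymm
  · exact closure_minimal hsub hTclosed
  · intro x hx
    have hseq : Filter.Tendsto
        (fun n : ℕ => x + (1 / (n + 1) : ℝ) • (x₀ - x)) Filter.atTop (nhds x) := by
      have h0 : Filter.Tendsto (fun n : ℕ => (1 / (n + 1) : ℝ) • (x₀ - x))
          Filter.atTop (nhds ((0 : ℝ) • (x₀ - x))) :=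
        tendsto_one_div_add_atTop_nhds_zero_nat.smul_const _
      rw [zero_smul] at h0
      have := (tendsto_const_nhds (x := x) (f := Filter.atTop (α := ℕ))).add h0
      simpa using this
    refine mem_closure_of_tendsto hseq (Filter.Eventually.of_forall fun n => ?_)
    set t : ℝ := 1 / (n + 1) with ht
    have ht0 : 0 < t := by positivity
    have ht1 : t ≤ 1 := by
      rw [ht]
      rw [div_le_one (by positivity)]
      norm_num
    constructor
    · intro a ha
      simp [map_add, map_smul, map_sub, hx.1 a ha, hx₀Y a ha]
    · intro l hl hns
      have hp : 0 ≤ (S.lam0 Δ - l) x := hx.2 l hl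
      have hq : 0 < (S.lam0 Δ - l) x₀ := hx₀F.2 l hl hns
      have : (S.lam0 Δ - l) (x + t • (x₀ - x))
          = (1 - t) * (S.lam0 Δ - l) x + t * (S.lam0 Δ - l) x₀ := by
        simp [map_add, map_smul, map_sub, smul_eq_mul]; ring
      rw [this]
      have h1 : 0 ≤ (1 - t) * (S.lam0 Δ - l) x :=
        mul_nonneg (by linarith) hp
      have h2 : 0 < t * (S.lam0 Δ - l) x₀ := mul_pos ht0 hq
      linarith
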